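/- Under the stated hypotheses, the averaged cost along the equilibrium satisfies the second-order expansion (1/Π)·∫₀^Π v(r(a) + p_a(σ)) dσ = (1/4)·(H₁₁·a₁² + H₂₂·a₂²) + o(‖a‖²) as a → 0; that is, the difference between the left-hand side and (1/4)(H₁₁a₁² + H₂₂a₂²), divided by ‖a‖², tends to 0 as a → 0. -/

import Mathlib

open Filter Topology intervalIntegral
set_option maxHeartbeats 8000000

lemma int_sin_per {T γ : ℝ} (k : ℤ) (h : γ * T = 2 * Real.pi * k) :
    ∫ σ in (0:ℝ)..T, Real.sin (γ * σ) = 0 := by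
  rcases eq_or_ne γ 0 with rfl | hγ
  · simp
  · rw [intervalIntegral.integral_comp_mul_left _ hγ]
    simp only [mul_zero, integral_sin, Real.cos_zero]
    rw [h, show (2:ℝ) * Real.pi * k = k * (2 * Real.pi) by ring, Real.cos_int_mul_two_pi]
    simp

lemma int_cos_per {T γ : ℝ} (hγ : γ ≠ 0) (k : ℤ) (h : γ * T = 2 * Real.pi * k) :
    ∫ σ in (0:ℝ)..T, Real.cos (γ * σ) = 0 := by
  rw [intervalIntegral.integral_comp_mul_left _ hγ]
  simp only [mul_zero, integral_cos, Real.sin_zero]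
  rw [h, show (2:ℝ) * Real.pi * k = ((2*k : ℤ) : ℝ) * Real.pi by push_cast; ring, Real.sin_int_mul_pi]
  simp

lemma int_sin_sq {T γ : ℝ} (hγ : γ ≠ 0) (k : ℤ) (h : γ * T = 2 * Real.pi * k) :
    ∫ σ in (0:ℝ)..T, Real.sin (γ * σ)^2 = T / 2 := by
  have h2 : (2*γ) * T = 2 * Real.pi * ((2*k : ℤ) : ℝ) := by push_cast; linarith
  have hc := int_cos_per (by simp [hγ] : (2*γ) ≠ 0) (2*k) h2
  have key : ∀ σ:ℝ, Real.sin (γ*σ)^2 = 1/2 - Real.cos ((2*γ)*σ)/2 := by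
    intro σ
    rw [Real.sin_sq_eq_half_sub]; ring_nf
  rw [intervalIntegral.integral_congr (g := fun σ => 1/2 - Real.cos ((2*γ)*σ)/2)
    (fun σ _ => key σ)]
  rw [intervalIntegral.integral_sub (intervalIntegrable_const)
    (((by fun_prop : Continuous fun σ:ℝ => Real.cos ((2*γ)*σ)/2)).intervalIntegrable _ _),
    intervalIntegral.integral_div, intervalIntegral.integral_div, hc]
  simp

lemma int_sin_mul {T α β : ℝ} (hs : α + β ≠ 0) (hd : α - β ≠ 0) (ks kd : ℤ)
    (h1 : (α+β) * T = 2 * Real.pi * ks) (h2 : (α-β) * T = 2 * Real.pi * kd) :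
    ∫ σ in (0:ℝ)..T, Real.sin (α*σ) * Real.sin (β*σ) = 0 := by
  have key : ∀ σ:ℝ, Real.sin (α*σ) * Real.sin (β*σ)
      = Real.cos ((α-β)*σ)/2 - Real.cos ((α+β)*σ)/2 := by
    intro σ; simp only [sub_mul, add_mul, Real.cos_sub, Real.cos_add]; ring
  rw [intervalIntegral.integral_congr
    (g := fun σ => Real.cos ((α-β)*σ)/2 - Real.cos ((α+β)*σ)/2) (fun σ _ => key σ)]
  rw [intervalIntegral.integral_sub
    (((by fun_prop : Continuous fun σ:ℝ => Real.cos ((α-β)*σ)/2)).intervalIntegrable _ _)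
    (((by fun_prop : Continuous fun σ:ℝ => Real.cos ((α+β)*σ)/2)).intervalIntegrable _ _),
    intervalIntegral.integral_div, intervalIntegral.integral_div,
    int_cos_per hd kd h2, int_cos_per hs ks h1]
  simp

lemma int_sin_triple {T α β γ : ℝ} (ka kb kc : ℤ)
    (ha : α*T = 2 * Real.pi * ka) (hb : β*T = 2 * Real.pi * kb)
    (hc : γ*T = 2 * Real.pi * kc) :
    ∫ σ in (0:ℝ)..T, Real.sin (α*σ) * Real.sin (β*σ) * Real.sin (γ*σ) = 0 := by
  have key : ∀ σ:ℝ, Real.sin (α*σ) * Real.sin (β*σ) * Real.sin (γ*σ)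
      = (Real.sin ((γ+α-β)*σ) + Real.sin ((γ-α+β)*σ)
        - Real.sin ((γ+α+β)*σ) - Real.sin ((γ-α-β)*σ))/4 := by
    intro σ
    simp only [add_mul, sub_mul, Real.sin_add, Real.sin_sub, Real.cos_add, Real.cos_sub]
    ring
  rw [intervalIntegral.integral_congr (g := fun σ => (Real.sin ((γ+α-β)*σ) + Real.sin ((γ-α+β)*σ)
        - Real.sin ((γ+α+β)*σ) - Real.sin ((γ-α-β)*σ))/4) (fun σ _ => key σ)]
  rw [intervalIntegral.integral_div]
  rw [intervalIntegral.integral_sub (by apply Continuous.intervalIntegrable; fun_prop)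
      (((by fun_prop : Continuous fun σ:ℝ => Real.sin ((γ-α-β)*σ))).intervalIntegrable _ _)]
  rw [intervalIntegral.integral_sub (by apply Continuous.intervalIntegrable; fun_prop)
      (((by fun_prop : Continuous fun σ:ℝ => Real.sin ((γ+α+β)*σ))).intervalIntegrable _ _)]
  rw [intervalIntegral.integral_add
      (((by fun_prop : Continuous fun σ:ℝ => Real.sin ((γ+α-β)*σ))).intervalIntegrable _ _)
      (((by fun_prop : Continuous fun σ:ℝ => Real.sin ((γ-α+β)*σ))).intervalIntegrable _ _)]
  rw [int_sin_per (kc+ka-kb) (by push_cast; linarith),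
      int_sin_per (kc-ka+kb) (by push_cast; linarith),
      int_sin_per (kc+ka+kb) (by push_cast; linarith),
      int_sin_per (kc-ka-kb) (by push_cast; linarith)]
  simp

-- quadratic little-o vanish helper
lemma aux_quad_zero {c : ℝ}
    (h : (fun t : ℝ => t ^ 2 * c) =o[nhds (0:ℝ)] fun t => t ^ 2) : c = 0 := by
  by_contra hc
  have hb := h.def (by positivity : (0:ℝ) < |c|/2)
  have hb' : ∀ᶠ t in nhdsWithin (0:ℝ) {0}ᶜ, ‖t ^ 2 * c‖ ≤ |c|/2 * ‖t ^ 2‖ :=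
    hb.filter_mono nhdsWithin_le_nhds
  obtain ⟨t, ht, htne⟩ := (hb'.and (eventually_mem_nhdsWithin)).exists
  have ht0 : t ≠ 0 := by simpa using htne
  have ht2 : (0:ℝ) < t^2 := lt_of_le_of_ne (sq_nonneg t) (Ne.symm (pow_ne_zero 2 ht0))
  rw [norm_mul, Real.norm_eq_abs, Real.norm_eq_abs, abs_pow, sq_abs] at ht
  nlinarith [abs_pos.mpr hc, ht]

-- generic linear-combination integral
lemma integral_comb {T : ℝ} {f₁ f₂ f₃ f₄ f₅ f₆ : ℝ → ℝ}
    (h₁ : Continuous f₁) (h₂ : Continuous f₂) (h₃ : Continuous f₃)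
    (h₄ : Continuous f₄) (h₅ : Continuous f₅) (h₆ : Continuous f₆)
    (k₀ k₁ k₂ k₃ k₄ k₅ k₆ : ℝ) :
    (∫ σ in (0:ℝ)..T, (k₀ + k₁ * f₁ σ + k₂ * f₂ σ + k₃ * f₃ σ + k₄ * f₄ σ + k₅ * f₅ σ
        + k₆ * f₆ σ))
      = k₀*T + k₁*(∫ σ in (0:ℝ)..T, f₁ σ) + k₂*(∫ σ in (0:ℝ)..T, f₂ σ)
        + k₃*(∫ σ in (0:ℝ)..T, f₃ σ) + k₄*(∫ σ in (0:ℝ)..T, f₄ σ)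
        + k₅*(∫ σ in (0:ℝ)..T, f₅ σ) + k₆*(∫ σ in (0:ℝ)..T, f₆ σ) := by
  have c0 : IntervalIntegrable (fun _ : ℝ => k₀) MeasureTheory.volume 0 T :=
    intervalIntegrable_const
  have c1 : IntervalIntegrable (fun σ => k₁ * f₁ σ) MeasureTheory.volume 0 T :=
    ((continuous_const.mul h₁).intervalIntegrable _ _)
  have c2 : IntervalIntegrable (fun σ => k₂ * f₂ σ) MeasureTheory.volume 0 T :=
    ((continuous_const.mul h₂).intervalIntegrable _ _)
  have c3 : IntervalIntegrable (fun σ => k₃ * f₃ σ) MeasureTheory.volume 0 T :=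
    ((continuous_const.mul h₃).intervalIntegrable _ _)
  have c4 : IntervalIntegrable (fun σ => k₄ * f₄ σ) MeasureTheory.volume 0 T :=
    ((continuous_const.mul h₄).intervalIntegrable _ _)
  have c5 : IntervalIntegrable (fun σ => k₅ * f₅ σ) MeasureTheory.volume 0 T :=
    ((continuous_const.mul h₅).intervalIntegrable _ _)
  have c6 : IntervalIntegrable (fun σ => k₆ * f₆ σ) MeasureTheory.volume 0 T :=
    ((continuous_const.mul h₆).intervalIntegrable _ _)
  rw [intervalIntegral.integral_add ((((((c0.add c1).add c2).add c3).add c4).add c5)) c6,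
      intervalIntegral.integral_add (((((c0.add c1).add c2).add c3).add c4)) c5,
      intervalIntegral.integral_add ((((c0.add c1).add c2).add c3)) c4,
      intervalIntegral.integral_add (((c0.add c1).add c2)) c3,
      intervalIntegral.integral_add ((c0.add c1)) c2,
      intervalIntegral.integral_add c0 c1,
      intervalIntegral.integral_const_mul, intervalIntegral.integral_const_mul,
      intervalIntegral.integral_const_mul, intervalIntegral.integral_const_mul,
      intervalIntegral.integral_const_mul, intervalIntegral.integral_const_mul,
      intervalIntegral.integral_const]
  simp [smul_eq_mul]
  ring

theorem averaged_cost_second_order_expansion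
    (v : ℝ × ℝ → ℝ) (hv : ContDiff ℝ 2 v) (hv0 : v 0 = 0)
    (hdv0 : fderiv ℝ v 0 = 0)
    (hHpos : ∀ x : ℝ × ℝ, x ≠ 0 → 0 < fderiv ℝ (fderiv ℝ v) 0 x x)
    (T ω₁ ω₂ : ℝ) (hT : 0 < T) (hω₁ : 0 < ω₁) (hω₂ : 0 < ω₂) (hne : ω₁ ≠ ω₂)
    (n₁ n₂ : ℕ) (hn₁ : 0 < n₁) (hn₂ : 0 < n₂)
    (hT₁ : ω₁ * T = 2 * Real.pi * n₁) (hT₂ : ω₂ * T = 2 * Real.pi * n₂)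
    (U : Set (ℝ × ℝ)) (hU : U ∈ nhds (0 : ℝ × ℝ))
    (r : ℝ × ℝ → ℝ × ℝ) (hr : ContDiffOn ℝ 2 r U) (hr0 : r 0 = 0)
    (heq₁ : ∀ a ∈ U,
      ∫ σ in (0 : ℝ)..T,
        v (r a + (a.1 * Real.sin (ω₁ * σ), a.2 * Real.sin (ω₂ * σ))) * Real.sin (ω₁ * σ) = 0)
    (heq₂ : ∀ a ∈ U,
      ∫ σ in (0 : ℝ)..T,
        v (r a + (a.1 * Real.sin (ω₁ * σ), a.2 * Real.sin (ω₂ * σ))) * Real.sin (ω₂ * σ) = 0)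
    (H₁₁ H₂₂ : ℝ)
    (hH₁₁ : H₁₁ = fderiv ℝ (fderiv ℝ v) 0 (1, 0) (1, 0))
    (hH₂₂ : H₂₂ = fderiv ℝ (fderiv ℝ v) 0 (0, 1) (0, 1)) :
    Tendsto
      (fun a : ℝ × ℝ =>
        ((1 / T) * (∫ σ in (0 : ℝ)..T,
            v (r a + (a.1 * Real.sin (ω₁ * σ), a.2 * Real.sin (ω₂ * σ))))
          - (1 / 4) * (H₁₁ * a.1 ^ 2 + H₂₂ * a.2 ^ 2)) / ‖a‖ ^ 2)
      (𝓝[≠] (0 : ℝ × ℝ)) (𝓝 0) := by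
  have hTne : T ≠ 0 := ne_of_gt hT
  set B := fderiv ℝ (fderiv ℝ v) 0 with hBdef
  set e₁ : ℝ × ℝ := (1, 0) with he₁
  set e₂ : ℝ × ℝ := (0, 1) with he₂
  -- differentiability facts
  have hvd : Differentiable ℝ v := hv.differentiable (by norm_num)
  have hv1 : ContDiff ℝ 1 (fderiv ℝ v) := hv.fderiv_right (le_refl _)
  have hd2 : HasFDerivAt (fderiv ℝ v) B 0 :=
    ((hv1.differentiable (by norm_num)) 0).hasFDerivAt
  have hsymm : ∀ x y : ℝ × ℝ, B x y = B y x :=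
    fun x y => second_derivative_symmetric (fun y => (hvd y).hasFDerivAt) hd2 x y
  -- Taylor remainder
  set ρ : ℝ × ℝ → ℝ := fun x => v x - B x x / 2 with hρdef
  have hvsplit : ∀ x, v x = B x x / 2 + ρ x := fun x => by simp [hρdef]
  have hBc : Continuous fun x : ℝ × ℝ => B x x := B.continuous.clm_apply continuous_id
  have hρc : Continuous ρ := (hv.continuous).sub (hBc.div_const 2)
  -- FTC representation
  have hcont1 : ∀ x : ℝ × ℝ, Continuous fun t : ℝ => (fderiv ℝ v (t • x)) x := by
    intro x
    exact ((hv1.continuous.comp (continuous_id.smul continuous_const)).clm_apply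
      continuous_const)
  have hcont2 : ∀ x : ℝ × ℝ, Continuous fun t : ℝ => (B (t • x)) x := by
    intro x
    exact ((B.continuous.comp (continuous_id.smul continuous_const)).clm_apply
      continuous_const)
  have hftc : ∀ x : ℝ × ℝ, v x = ∫ t in (0:ℝ)..1, (fderiv ℝ v (t • x)) x := by
    intro x
    have hder : ∀ t ∈ Set.uIcc (0:ℝ) 1,
        HasDerivAt (fun s : ℝ => v (s • x)) ((fderiv ℝ v (t • x)) x) t := by
      intro t _
      have h1 : HasDerivAt (fun s : ℝ => s • x) x t := by
        simpa using (hasDerivAt_id t).smul_const x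
      exact ((hvd (t • x)).hasFDerivAt).comp_hasDerivAt t h1
    have heval := intervalIntegral.integral_eq_sub_of_hasDerivAt hder
      ((hcont1 x).intervalIntegrable _ _)
    rw [heval]
    simp [hv0]
  -- Taylor littleO
  have hρo : ρ =o[nhds (0 : ℝ × ℝ)] fun x => ‖x‖^2 := by
    have hld : (fun y : ℝ × ℝ => fderiv ℝ v y - B y) =o[nhds (0 : ℝ × ℝ)] fun y => y := by
      have h := hasFDerivAt_iff_isLittleO_nhds_zero.mp hd2
      simpa [hdv0] using h
    rw [Asymptotics.isLittleO_iff]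
    intro ε hε
    obtain ⟨δ, hδ, hδball⟩ := Metric.eventually_nhds_iff.mp (hld.def hε)
    filter_upwards [Metric.ball_mem_nhds (0 : ℝ × ℝ) hδ] with x hx
    have hxδ : ‖x‖ < δ := by simpa [dist_eq_norm] using hx
    have hBint : (∫ t in (0:ℝ)..1, (B (t • x)) x) = B x x / 2 := by
      have hpt : ∀ t : ℝ, (B (t • x)) x = t * (B x x) := by
        intro t; rw [map_smul]; simp
      simp only [hpt]
      rw [intervalIntegral.integral_mul_const, integral_id]
      ring
    have hsub : ρ x = ∫ t in (0:ℝ)..1,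
        ((fderiv ℝ v (t • x)) x - (B (t • x)) x) := by
      rw [intervalIntegral.integral_sub ((hcont1 x).intervalIntegrable _ _)
        ((hcont2 x).intervalIntegrable _ _), ← hftc x, hBint]
    have hbound : ∀ t ∈ Set.uIoc (0:ℝ) 1,
        ‖(fderiv ℝ v (t • x)) x - (B (t • x)) x‖ ≤ ε * ‖x‖^2 := by
      intro t ht
      rw [Set.uIoc_of_le (by norm_num : (0:ℝ) ≤ 1)] at ht
      have htabs : |t| ≤ 1 := by
        rw [abs_of_pos ht.1]; exact ht.2
      have htx : ‖t • x‖ ≤ ‖x‖ := by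
        rw [norm_smul, Real.norm_eq_abs]
        nlinarith [norm_nonneg x]
      have hd : dist (t • x) (0 : ℝ × ℝ) < δ := by
        rw [dist_eq_norm, sub_zero]; exact lt_of_le_of_lt htx hxδ
      have h1 : ‖(fderiv ℝ v (t • x)) x - (B (t • x)) x‖
          ≤ ‖fderiv ℝ v (t • x) - B (t • x)‖ * ‖x‖ := by
        rw [← ContinuousLinearMap.sub_apply]
        exact (fderiv ℝ v (t • x) - B (t • x)).le_opNorm x
      have h2 : ‖fderiv ℝ v (t • x) - B (t • x)‖ ≤ ε * ‖t • x‖ := hδball hd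
      calc ‖(fderiv ℝ v (t • x)) x - (B (t • x)) x‖
          ≤ (ε * ‖t • x‖) * ‖x‖ := h1.trans (by
            apply mul_le_mul_of_nonneg_right h2 (norm_nonneg x))
        _ ≤ ε * ‖x‖^2 := by
            have h3 := mul_le_mul_of_nonneg_left htx (mul_nonneg hε.le (norm_nonneg x))
            nlinarith [h3]
    have := intervalIntegral.norm_integral_le_of_norm_le_const hbound
    rw [← hsub] at this
    simpa using this
  -- perturbation map
  set p : ℝ × ℝ → ℝ → ℝ × ℝ :=
    fun a σ => (a.1 * Real.sin (ω₁ * σ), a.2 * Real.sin (ω₂ * σ)) with hp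
  -- base trig integrals
  have hk1 : ω₁ * T = 2 * Real.pi * ((n₁ : ℤ) : ℝ) := by push_cast; exact hT₁
  have hk2 : ω₂ * T = 2 * Real.pi * ((n₂ : ℤ) : ℝ) := by push_cast; exact hT₂
  have hS1 : ∫ σ in (0:ℝ)..T, Real.sin (ω₁ * σ) = 0 := int_sin_per _ hk1
  have hS2 : ∫ σ in (0:ℝ)..T, Real.sin (ω₂ * σ) = 0 := int_sin_per _ hk2
  have hS11 : ∫ σ in (0:ℝ)..T, Real.sin (ω₁ * σ)^2 = T/2 := int_sin_sq (ne_of_gt hω₁) _ hk1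
  have hS22 : ∫ σ in (0:ℝ)..T, Real.sin (ω₂ * σ)^2 = T/2 := int_sin_sq (ne_of_gt hω₂) _ hk2
  have hS12 : ∫ σ in (0:ℝ)..T, Real.sin (ω₁ * σ) * Real.sin (ω₂ * σ) = 0 :=
    int_sin_mul (by positivity) (sub_ne_zero.mpr hne) ((n₁:ℤ) + n₂) ((n₁:ℤ) - n₂)
      (by push_cast; linarith) (by push_cast; linarith)
  have hQ111 : ∫ σ in (0:ℝ)..T,
      Real.sin (ω₁*σ) * Real.sin (ω₁*σ) * Real.sin (ω₁*σ) = 0 :=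
    int_sin_triple _ _ _ hk1 hk1 hk1
  have hQ121 : ∫ σ in (0:ℝ)..T,
      Real.sin (ω₁*σ) * Real.sin (ω₂*σ) * Real.sin (ω₁*σ) = 0 :=
    int_sin_triple _ _ _ hk1 hk2 hk1
  have hQ221 : ∫ σ in (0:ℝ)..T,
      Real.sin (ω₂*σ) * Real.sin (ω₂*σ) * Real.sin (ω₁*σ) = 0 :=
    int_sin_triple _ _ _ hk2 hk2 hk1
  have hQ112 : ∫ σ in (0:ℝ)..T,
      Real.sin (ω₁*σ) * Real.sin (ω₁*σ) * Real.sin (ω₂*σ) = 0 :=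
    int_sin_triple _ _ _ hk1 hk1 hk2
  have hQ122 : ∫ σ in (0:ℝ)..T,
      Real.sin (ω₁*σ) * Real.sin (ω₂*σ) * Real.sin (ω₂*σ) = 0 :=
    int_sin_triple _ _ _ hk1 hk2 hk2
  have hQ222 : ∫ σ in (0:ℝ)..T,
      Real.sin (ω₂*σ) * Real.sin (ω₂*σ) * Real.sin (ω₂*σ) = 0 :=
    int_sin_triple _ _ _ hk2 hk2 hk2
  -- bilinear expansion
  have hexp : ∀ (c a : ℝ × ℝ) (σ : ℝ), B (c + p a σ) (c + p a σ)
      = B c c + (a.1 * (B c e₁ + B e₁ c)) * Real.sin (ω₁*σ)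
        + (a.2 * (B c e₂ + B e₂ c)) * Real.sin (ω₂*σ)
        + (a.1^2 * B e₁ e₁) * Real.sin (ω₁*σ)^2
        + (a.1*a.2*(B e₁ e₂ + B e₂ e₁)) * (Real.sin (ω₁*σ) * Real.sin (ω₂*σ))
        + (a.2^2 * B e₂ e₂) * Real.sin (ω₂*σ)^2 := by
    intro c a σ
    have hsplit : c + p a σ
        = c + (a.1 * Real.sin (ω₁*σ)) • e₁ + (a.2 * Real.sin (ω₂*σ)) • e₂ := by
      simp [hp, he₁, he₂, Prod.ext_iff]
    rw [hsplit]
    simp only [map_add, map_smul, ContinuousLinearMap.add_apply,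
      ContinuousLinearMap.smul_apply, ContinuousLinearMap.coe_smul', Pi.smul_apply,
      smul_eq_mul]
    ring
  -- continuity in σ
  have hcσ : ∀ a : ℝ × ℝ, Continuous fun σ => r a + p a σ := by
    intro a; rw [hp]; fun_prop
  have hcB2 : ∀ a : ℝ × ℝ, Continuous fun σ => B (r a + p a σ) (r a + p a σ) :=
    fun a => hBc.comp (hcσ a)
  have hcρ2 : ∀ a : ℝ × ℝ, Continuous fun σ => ρ (r a + p a σ) :=
    fun a => hρc.comp (hcσ a)
  -- split integral of v into quadratic + remainder
  have hsplitint : ∀ (a : ℝ × ℝ) (w : ℝ → ℝ), Continuous w →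
      (∫ σ in (0:ℝ)..T, v (r a + p a σ) * w σ)
        = (∫ σ in (0:ℝ)..T, B (r a + p a σ) (r a + p a σ) * w σ)/2
          + ∫ σ in (0:ℝ)..T, ρ (r a + p a σ) * w σ := by
    intro a w hw
    have hpt : ∀ σ : ℝ, v (r a + p a σ) * w σ
        = (B (r a + p a σ) (r a + p a σ) * w σ)/2 + ρ (r a + p a σ) * w σ := by
      intro σ; rw [hvsplit (r a + p a σ)]; ring
    rw [intervalIntegral.integral_congr (g := fun σ =>
        (B (r a + p a σ) (r a + p a σ) * w σ)/2 + ρ (r a + p a σ) * w σ)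
        (fun σ _ => hpt σ),
      intervalIntegral.integral_add
        (f := fun σ => (B (r a + p a σ) (r a + p a σ) * w σ)/2)
        (g := fun σ => ρ (r a + p a σ) * w σ)
        ((((hcB2 a).mul hw).div_const 2).intervalIntegrable _ _)
        (((hcρ2 a).mul hw).intervalIntegrable _ _),
      intervalIntegral.integral_div]
  -- quadratic moment integrals
  have hIQ0 : ∀ a : ℝ × ℝ, (∫ σ in (0:ℝ)..T, B (r a + p a σ) (r a + p a σ))
      = T * B (r a) (r a) + (T/2) * (a.1^2 * B e₁ e₁) + (T/2) * (a.2^2 * B e₂ e₂) := by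
    intro a
    refine Eq.trans (intervalIntegral.integral_congr (g := fun σ =>
        B (r a) (r a)
        + (a.1 * (B (r a) e₁ + B e₁ (r a))) * Real.sin (ω₁*σ)
        + (a.2 * (B (r a) e₂ + B e₂ (r a))) * Real.sin (ω₂*σ)
        + (a.1^2 * B e₁ e₁) * Real.sin (ω₁*σ)^2
        + (a.1*a.2*(B e₁ e₂ + B e₂ e₁)) * (Real.sin (ω₁*σ) * Real.sin (ω₂*σ))
        + (a.2^2 * B e₂ e₂) * Real.sin (ω₂*σ)^2
        + 0 * Real.sin (ω₂*σ)) (fun σ _ => by rw [hexp]; ring)) ?_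
    rw [integral_comb (by fun_prop) (by fun_prop) (by fun_prop) (by fun_prop) (by fun_prop)
      (by fun_prop) _ _ _ _ _ _ _, hS1, hS2, hS11, hS12, hS22]
    ring
  have hIQ1 : ∀ a : ℝ × ℝ,
      (∫ σ in (0:ℝ)..T, B (r a + p a σ) (r a + p a σ) * Real.sin (ω₁*σ))
      = (T/2) * (a.1 * (B (r a) e₁ + B e₁ (r a))) := by
    intro a
    refine Eq.trans (intervalIntegral.integral_congr (g := fun σ =>
        (0:ℝ)
        + (B (r a) (r a)) * Real.sin (ω₁*σ)
        + (a.1 * (B (r a) e₁ + B e₁ (r a))) * Real.sin (ω₁*σ)^2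
        + (a.2 * (B (r a) e₂ + B e₂ (r a))) * (Real.sin (ω₁*σ) * Real.sin (ω₂*σ))
        + (a.1^2 * B e₁ e₁) * (Real.sin (ω₁*σ) * Real.sin (ω₁*σ) * Real.sin (ω₁*σ))
        + (a.1*a.2*(B e₁ e₂ + B e₂ e₁))
            * (Real.sin (ω₁*σ) * Real.sin (ω₂*σ) * Real.sin (ω₁*σ))
        + (a.2^2 * B e₂ e₂) * (Real.sin (ω₂*σ) * Real.sin (ω₂*σ) * Real.sin (ω₁*σ)))
        (fun σ _ => by rw [hexp]; ring)) ?_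
    rw [integral_comb (by fun_prop) (by fun_prop) (by fun_prop) (by fun_prop) (by fun_prop)
      (by fun_prop) _ _ _ _ _ _ _, hS1, hS11, hS12, hQ111, hQ121, hQ221]
    ring
  have hIQ2 : ∀ a : ℝ × ℝ,
      (∫ σ in (0:ℝ)..T, B (r a + p a σ) (r a + p a σ) * Real.sin (ω₂*σ))
      = (T/2) * (a.2 * (B (r a) e₂ + B e₂ (r a))) := by
    intro a
    refine Eq.trans (intervalIntegral.integral_congr (g := fun σ =>
        (0:ℝ)
        + (B (r a) (r a)) * Real.sin (ω₂*σ)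
        + (a.1 * (B (r a) e₁ + B e₁ (r a))) * (Real.sin (ω₁*σ) * Real.sin (ω₂*σ))
        + (a.2 * (B (r a) e₂ + B e₂ (r a))) * Real.sin (ω₂*σ)^2
        + (a.1^2 * B e₁ e₁) * (Real.sin (ω₁*σ) * Real.sin (ω₁*σ) * Real.sin (ω₂*σ))
        + (a.1*a.2*(B e₁ e₂ + B e₂ e₁))
            * (Real.sin (ω₁*σ) * Real.sin (ω₂*σ) * Real.sin (ω₂*σ))
        + (a.2^2 * B e₂ e₂) * (Real.sin (ω₂*σ) * Real.sin (ω₂*σ) * Real.sin (ω₂*σ)))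
        (fun σ _ => by rw [hexp]; ring)) ?_
    rw [integral_comb (by fun_prop) (by fun_prop) (by fun_prop) (by fun_prop) (by fun_prop)
      (by fun_prop) _ _ _ _ _ _ _, hS2, hS12, hS22, hQ112, hQ122, hQ222]
    ring
  -- derivative of r at 0
  have hdiffr : DifferentiableAt ℝ r 0 :=
    (hr.contDiffAt hU).differentiableAt (by norm_num)
  set M := fderiv ℝ r 0 with hMdef
  have hM : HasFDerivAt r M 0 := hdiffr.hasFDerivAt
  have hrlin : (fun a : ℝ × ℝ => r a - M a) =o[nhds (0 : ℝ × ℝ)] fun a => a := by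
    have h := hasFDerivAt_iff_isLittleO_nhds_zero.mp hM
    simpa [hr0] using h
  have hrO : (fun a : ℝ × ℝ => r a) =O[nhds (0 : ℝ × ℝ)] fun a => a := by
    have h := hM.isBigO_sub
    simpa [hr0] using h
  obtain ⟨K, hK, hKb⟩ := hrO.exists_nonneg
  have hKbound : ∀ᶠ a : ℝ × ℝ in nhds 0, ‖r a‖ ≤ K * ‖a‖ := hKb.bound
  -- norm bound on perturbation
  have hpnorm : ∀ (a : ℝ × ℝ) (σ : ℝ), ‖p a σ‖ ≤ ‖a‖ := by
    intro a σ
    rw [hp]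
    rw [Prod.norm_def]
    have h1 : ‖a.1 * Real.sin (ω₁ * σ)‖ ≤ ‖a‖ := by
      rw [Real.norm_eq_abs, abs_mul]
      have h := norm_fst_le a
      have hs : |Real.sin (ω₁*σ)| ≤ 1 :=
        abs_le.mpr ⟨Real.neg_one_le_sin _, Real.sin_le_one _⟩
      rw [Real.norm_eq_abs] at h
      nlinarith [abs_nonneg a.1, abs_nonneg (Real.sin (ω₁*σ))]
    have h2 : ‖a.2 * Real.sin (ω₂ * σ)‖ ≤ ‖a‖ := by
      rw [Real.norm_eq_abs, abs_mul]
      have h := norm_snd_le a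
      have hs : |Real.sin (ω₂*σ)| ≤ 1 :=
        abs_le.mpr ⟨Real.neg_one_le_sin _, Real.sin_le_one _⟩
      rw [Real.norm_eq_abs] at h
      nlinarith [abs_nonneg a.2, abs_nonneg (Real.sin (ω₂*σ))]
    exact max_le h1 h2
  -- remainder integrals are o(‖a‖²)
  have hRo : ∀ w : ℝ → ℝ, (∀ σ, |w σ| ≤ 1) →
      (fun a : ℝ × ℝ => ∫ σ in (0:ℝ)..T, ρ (r a + p a σ) * w σ)
        =o[nhds (0 : ℝ × ℝ)] fun a => ‖a‖^2 := by
    intro w hw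
    rw [Asymptotics.isLittleO_iff]
    intro c hc
    have hK1 : (0:ℝ) < K + 1 := by linarith
    have hε' : (0:ℝ) < c / ((K+1)^2 * T) := by positivity
    obtain ⟨δ, hδ, hδb⟩ := Metric.eventually_nhds_iff.mp (hρo.def hε')
    have hδK : (0:ℝ) < δ / (K+1) := by positivity
    filter_upwards [hKbound, Metric.ball_mem_nhds (0 : ℝ × ℝ) hδK] with a ha1 ha2
    have haK : ‖a‖ < δ / (K+1) := by simpa [dist_eq_norm] using ha2
    have hbound : ∀ σ ∈ Set.uIoc (0:ℝ) T,
        ‖ρ (r a + p a σ) * w σ‖ ≤ (c / ((K+1)^2 * T)) * ((K+1) * ‖a‖)^2 := by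
      intro σ _
      have hnx : ‖r a + p a σ‖ ≤ (K+1) * ‖a‖ := by
        calc ‖r a + p a σ‖ ≤ ‖r a‖ + ‖p a σ‖ := norm_add_le _ _
          _ ≤ K * ‖a‖ + ‖a‖ := add_le_add ha1 (hpnorm a σ)
          _ = (K+1) * ‖a‖ := by ring
      have hd : dist (r a + p a σ) (0 : ℝ × ℝ) < δ := by
        rw [dist_eq_norm, sub_zero]
        calc ‖r a + p a σ‖ ≤ (K+1) * ‖a‖ := hnx
          _ < (K+1) * (δ/(K+1)) := by
            exact mul_lt_mul_of_pos_left haK hK1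
          _ = δ := by field_simp
      have hρb : ‖ρ (r a + p a σ)‖ ≤ (c / ((K+1)^2 * T)) * ‖r a + p a σ‖^2 := by
        have h := hδb hd
        rwa [Real.norm_of_nonneg (by positivity : (0:ℝ) ≤ ‖r a + p a σ‖^2)] at h
      rw [norm_mul]
      calc ‖ρ (r a + p a σ)‖ * ‖w σ‖
          ≤ ‖ρ (r a + p a σ)‖ * 1 := by
            apply mul_le_mul_of_nonneg_left _ (norm_nonneg _)
            simpa [Real.norm_eq_abs] using hw σ
        _ = ‖ρ (r a + p a σ)‖ := mul_one _
        _ ≤ (c / ((K+1)^2 * T)) * ‖r a + p a σ‖^2 := hρb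
        _ ≤ (c / ((K+1)^2 * T)) * ((K+1) * ‖a‖)^2 := by
            apply mul_le_mul_of_nonneg_left _ (le_of_lt hε')
            have h0 : (0:ℝ) ≤ ‖r a + p a σ‖ := norm_nonneg _
            nlinarith [hnx]
    have hint := intervalIntegral.norm_integral_le_of_norm_le_const hbound
    have hTabs : |T - 0| = T := by rw [sub_zero, abs_of_pos hT]
    rw [hTabs] at hint
    calc ‖∫ σ in (0:ℝ)..T, ρ (r a + p a σ) * w σ‖
        ≤ (c / ((K+1)^2 * T)) * ((K+1) * ‖a‖)^2 * T := hint
      _ = c * ‖a‖^2 := by field_simp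
      _ ≤ c * ‖‖a‖^2‖ := by
          rw [Real.norm_of_nonneg (by positivity)]
  -- equilibrium constraints
  have hsinb1 : ∀ σ : ℝ, |Real.sin (ω₁*σ)| ≤ 1 :=
    fun σ => abs_le.mpr ⟨Real.neg_one_le_sin _, Real.sin_le_one _⟩
  have hsinb2 : ∀ σ : ℝ, |Real.sin (ω₂*σ)| ≤ 1 :=
    fun σ => abs_le.mpr ⟨Real.neg_one_le_sin _, Real.sin_le_one _⟩
  have hcon1eq : ∀ a ∈ U, T * (a.1 * B (r a) e₁)
      = -2 * (∫ σ in (0:ℝ)..T, ρ (r a + p a σ) * Real.sin (ω₁*σ)) := by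
    intro a ha
    have h0 : (∫ σ in (0:ℝ)..T, v (r a + p a σ) * Real.sin (ω₁*σ)) = 0 := heq₁ a ha
    rw [hsplitint a _ (by fun_prop), hIQ1 a, hsymm e₁ (r a)] at h0
    linear_combination 2 * h0
  have hcon2eq : ∀ a ∈ U, T * (a.2 * B (r a) e₂)
      = -2 * (∫ σ in (0:ℝ)..T, ρ (r a + p a σ) * Real.sin (ω₂*σ)) := by
    intro a ha
    have h0 : (∫ σ in (0:ℝ)..T, v (r a + p a σ) * Real.sin (ω₂*σ)) = 0 := heq₂ a ha
    rw [hsplitint a _ (by fun_prop), hIQ2 a, hsymm e₂ (r a)] at h0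
    linear_combination 2 * h0
  have hcon1 : (fun a : ℝ × ℝ => a.1 * B (r a) e₁) =o[nhds (0:ℝ×ℝ)] fun a => ‖a‖^2 := by
    have h := (hRo (fun σ => Real.sin (ω₁*σ)) hsinb1).const_mul_left (-2/T)
    refine h.congr' ?_ EventuallyEq.rfl
    filter_upwards [hU] with a ha
    have hh := hcon1eq a ha
    field_simp
    linear_combination -hh
  have hcon2 : (fun a : ℝ × ℝ => a.2 * B (r a) e₂) =o[nhds (0:ℝ×ℝ)] fun a => ‖a‖^2 := by
    have h := (hRo (fun σ => Real.sin (ω₂*σ)) hsinb2).const_mul_left (-2/T)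
    refine h.congr' ?_ EventuallyEq.rfl
    filter_upwards [hU] with a ha
    have hh := hcon2eq a ha
    field_simp
    linear_combination -hh
  -- the linear part of r kills the quadratic form
  have hfstO : (fun a : ℝ × ℝ => a.1) =O[nhds (0:ℝ×ℝ)] fun a => ‖a‖ :=
    Asymptotics.IsBigO.of_bound 1 (Filter.Eventually.of_forall fun a => by
      simpa using norm_fst_le a)
  have hsndO : (fun a : ℝ × ℝ => a.2) =O[nhds (0:ℝ×ℝ)] fun a => ‖a‖ :=
    Asymptotics.IsBigO.of_bound 1 (Filter.Eventually.of_forall fun a => by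
      simpa using norm_snd_le a)
  have hsmall : ∀ w : ℝ × ℝ, (fun a : ℝ × ℝ => B (r a - M a) w)
      =o[nhds (0:ℝ×ℝ)] fun a => ‖a‖ := by
    intro w
    have h1 : (fun a : ℝ × ℝ => B (r a - M a) w)
        =O[nhds (0:ℝ×ℝ)] fun a => r a - M a := by
      have h := (B.flip w).isBigO_comp (fun a : ℝ × ℝ => r a - M a) (nhds 0)
      simpa [ContinuousLinearMap.flip_apply] using h
    exact (h1.trans_isLittleO hrlin).norm_right
  have hquad1 : (fun a : ℝ × ℝ => a.1 * B (M a) e₁) =o[nhds (0:ℝ×ℝ)] fun a => ‖a‖^2 := by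
    have hprod := hfstO.mul_isLittleO (hsmall e₁)
    have h := hcon1.sub (hprod.congr (fun a => rfl) (fun a => (pow_two ‖a‖).symm))
    refine h.congr (fun a => ?_) (fun a => rfl)
    simp only [map_sub, ContinuousLinearMap.sub_apply]
    ring
  have hquad2 : (fun a : ℝ × ℝ => a.2 * B (M a) e₂) =o[nhds (0:ℝ×ℝ)] fun a => ‖a‖^2 := by
    have hprod := hsndO.mul_isLittleO (hsmall e₂)
    have h := hcon2.sub (hprod.congr (fun a => rfl) (fun a => (pow_two ‖a‖).symm))
    refine h.congr (fun a => ?_) (fun a => rfl)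
    simp only [map_sub, ContinuousLinearMap.sub_apply]
    ring
  have hpath : ∀ u : ℝ × ℝ, Tendsto (fun t : ℝ => t • u) (nhds (0:ℝ)) (nhds (0:ℝ×ℝ)) := by
    intro u
    have hcs : Continuous fun t : ℝ => t • u := by fun_prop
    have h := hcs.tendsto 0
    simpa using h
  have hrightpath : ∀ (u : ℝ × ℝ) (t : ℝ), ‖t • u‖^2 = ‖u‖^2 * t^2 := by
    intro u t; rw [norm_smul, Real.norm_eq_abs, mul_pow, sq_abs]; ring
  have hz1 : ∀ u : ℝ × ℝ, u.1 * B (M u) e₁ = 0 := by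
    intro u
    apply aux_quad_zero
    have h := hquad1.comp_tendsto (hpath u)
    have hleft : ∀ t : ℝ, ((fun a : ℝ × ℝ => a.1 * B (M a) e₁) ∘ fun t : ℝ => t • u) t
        = t^2 * (u.1 * B (M u) e₁) := by
      intro t
      simp only [Function.comp_apply, Prod.smul_fst, map_smul,
        ContinuousLinearMap.smul_apply, smul_eq_mul]
      ring
    have h2 := h.congr hleft (fun t => by
      simpa using hrightpath u t)
    exact h2.trans_isBigO (Asymptotics.isBigO_const_mul_self (‖u‖^2) (fun t : ℝ => t^2) _)
  have hz2 : ∀ u : ℝ × ℝ, u.2 * B (M u) e₂ = 0 := by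
    intro u
    apply aux_quad_zero
    have h := hquad2.comp_tendsto (hpath u)
    have hleft : ∀ t : ℝ, ((fun a : ℝ × ℝ => a.2 * B (M a) e₂) ∘ fun t : ℝ => t • u) t
        = t^2 * (u.2 * B (M u) e₂) := by
      intro t
      simp only [Function.comp_apply, Prod.smul_snd, map_smul,
        ContinuousLinearMap.smul_apply, smul_eq_mul]
      ring
    have h2 := h.congr hleft (fun t => by
      simpa using hrightpath u t)
    exact h2.trans_isBigO (Asymptotics.isBigO_const_mul_self (‖u‖^2) (fun t : ℝ => t^2) _)
  -- matrix entries vanish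
  have z11 : B (M e₁) e₁ = 0 := by
    have h := hz1 e₁
    rw [show e₁.1 = 1 by rw [he₁], one_mul] at h
    exact h
  have z22 : B (M e₂) e₂ = 0 := by
    have h := hz2 e₂
    rw [show e₂.2 = 1 by rw [he₂], one_mul] at h
    exact h
  have z21 : B (M e₂) e₁ = 0 := by
    have h := hz1 (e₁ + e₂)
    rw [show (e₁ + e₂).1 = 1 by rw [he₁, he₂]; simp, one_mul, map_add] at h
    simpa [ContinuousLinearMap.add_apply, z11] using h
  have z12 : B (M e₁) e₂ = 0 := by
    have h := hz2 (e₁ + e₂)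
    rw [show (e₁ + e₂).2 = 1 by rw [he₁, he₂]; simp, one_mul, map_add] at h
    simpa [ContinuousLinearMap.add_apply, z22] using h
  -- M vanishes
  have hM0 : ∀ u : ℝ × ℝ, M u = 0 := by
    intro u
    by_contra hne0
    have hpos := hHpos (M u) hne0
    have hu : u = u.1 • e₁ + u.2 • e₂ := by
      rw [he₁, he₂]; ext <;> simp
    have hBMu1 : B (M u) e₁ = 0 := by
      calc B (M u) e₁ = B (M (u.1 • e₁ + u.2 • e₂)) e₁ := by rw [← hu]
        _ = 0 := by
          simp only [map_add, map_smul, ContinuousLinearMap.add_apply,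
            ContinuousLinearMap.smul_apply, smul_eq_mul, z11, z21]
          ring
    have hBMu2 : B (M u) e₂ = 0 := by
      calc B (M u) e₂ = B (M (u.1 • e₁ + u.2 • e₂)) e₂ := by rw [← hu]
        _ = 0 := by
          simp only [map_add, map_smul, ContinuousLinearMap.add_apply,
            ContinuousLinearMap.smul_apply, smul_eq_mul, z12, z22]
          ring
    have hmu : M u = (M u).1 • e₁ + (M u).2 • e₂ := by
      rw [he₁, he₂]; ext <;> simp
    have hdecomp : B (M u) (M u) = (M u).1 * B (M u) e₁ + (M u).2 * B (M u) e₂ := by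
      nth_rewrite 2 [hmu]
      simp [map_add, map_smul, smul_eq_mul]
    rw [hdecomp, hBMu1, hBMu2] at hpos
    simp at hpos
  -- r is o(‖a‖)
  have hro : (fun a : ℝ × ℝ => r a) =o[nhds (0:ℝ×ℝ)] fun a => ‖a‖ := by
    have h2 : (fun a : ℝ × ℝ => r a) =o[nhds (0:ℝ×ℝ)] fun a => a := by
      have h3 : ∀ a : ℝ × ℝ, r a - M a = r a := fun a => by rw [hM0 a]; simp
      exact hrlin.congr h3 (fun a => rfl)
    exact h2.norm_right
  have hBrr : (fun a : ℝ × ℝ => B (r a) (r a)) =o[nhds (0:ℝ×ℝ)] fun a => ‖a‖^2 := by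
    have h1 : (fun a : ℝ × ℝ => B (r a) (r a)) =O[nhds (0:ℝ×ℝ)]
        fun a => ‖r a‖ * ‖r a‖ :=
      Asymptotics.IsBigO.of_bound ‖B‖ (Filter.Eventually.of_forall fun a => by
        have h := B.le_opNorm₂ (r a) (r a)
        calc ‖B (r a) (r a)‖ ≤ ‖B‖ * ‖r a‖ * ‖r a‖ := h
          _ = ‖B‖ * ‖‖r a‖ * ‖r a‖‖ := by
              rw [Real.norm_of_nonneg (by positivity)]; ring)
    have h2 := hro.norm_left
    have h3 := h2.mul h2
    exact (h1.trans_isLittleO h3).congr (fun a => rfl) (fun a => (pow_two ‖a‖).symm)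
  -- final assembly
  have hR0o := hRo (fun _ => (1:ℝ)) (fun σ => by norm_num)
  have hsum := (hBrr.const_mul_left (1/2)).add (hR0o.const_mul_left (1/T))
  have hFo : (fun a : ℝ × ℝ =>
      ((1 / T) * (∫ σ in (0 : ℝ)..T,
          v (r a + (a.1 * Real.sin (ω₁ * σ), a.2 * Real.sin (ω₂ * σ))))
        - (1 / 4) * (H₁₁ * a.1 ^ 2 + H₂₂ * a.2 ^ 2)))
      =o[nhds (0:ℝ×ℝ)] fun a => ‖a‖ ^ 2 := by
    refine hsum.congr (fun a => ?_) (fun a => rfl)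
    have h1 := hsplitint a (fun _ => (1:ℝ)) continuous_const
    have h2 := hIQ0 a
    have hmul : (∫ σ in (0:ℝ)..T,
        v (r a + (a.1 * Real.sin (ω₁ * σ), a.2 * Real.sin (ω₂ * σ))))
        = ∫ σ in (0:ℝ)..T, v (r a + p a σ) := by
      rw [hp]
    simp only [mul_one] at h1 ⊢
    rw [hmul, h1, h2, hH₁₁, hH₂₂]
    field_simp
    ring
  exact ((hFo.mono nhdsWithin_le_nhds).tendsto_div_nhds_zero)
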